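/- If D is a 3-anti-traceable oriented graph with |V(D)| ≥ 5 and |V(D)| odd, then D has an anti-directed cycle of length |V(D)| − 1 and a hamiltonian anti-directed path. -/

import Mathlib

variable {V : Type*}

/-- An oriented graph: no 2-cycles (and hence no loops). -/
def Oriented (A : V → V → Prop) : Prop := ∀ u v, A u v → ¬ A v u

/-- `AltPath A b l` : the consecutive vertices of `l` are joined by arcs whose
directions alternate, the first arc being forward iff `b = true`. -/
def AltPath (A : V → V → Prop) : Bool → List V → Prop
  | _, [] => True
  | _, [_] => True
  | b, x :: y :: rest => (if b then A x y else A y x) ∧ AltPath A (!b) (y :: rest)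

/-- An anti-directed path: distinct vertices with alternating arcs. -/
def IsAntiPath (A : V → V → Prop) (l : List V) : Prop :=
  l.Nodup ∧ ∃ b : Bool, AltPath A b l

/-- The induced subdigraph on the vertex set `S` has a hamiltonian anti-directed path. -/
def AntiTraceableOn [DecidableEq V] (A : V → V → Prop) (S : Finset V) : Prop :=
  ∃ l : List V, l.Nodup ∧ l.toFinset = S ∧ ∃ b : Bool, AltPath A b l

/-- The digraph has a hamiltonian anti-directed path. -/
def AntiTraceable [Fintype V] [DecidableEq V] (A : V → V → Prop) : Prop :=
  AntiTraceableOn A Finset.univ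

/-- `k`-anti-traceable: order at least `k` and every induced subdigraph on `k`
vertices has a hamiltonian anti-directed path. -/
def KAntiTraceable [Fintype V] [DecidableEq V] (k : ℕ) (A : V → V → Prop) : Prop :=
  k ≤ Fintype.card V ∧ ∀ S : Finset V, S.card = k → AntiTraceableOn A S

/-- An anti-directed cycle: a cyclic sequence of distinct vertices, of even
length at least 4, in which even-indexed vertices are sources and odd-indexed
vertices are sinks of the two incident arcs. -/
def AltCycle (A : V → V → Prop) (l : List V) : Prop :=
  l.Nodup ∧ 4 ≤ l.length ∧ l.length % 2 = 0 ∧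
  ∀ i : Fin l.length,
    if i.1 % 2 = 0 then
      A (l.get i) (l.get ⟨(i.1 + 1) % l.length, Nat.mod_lt _ (Nat.zero_lt_of_lt i.2)⟩)
    else
      A (l.get ⟨(i.1 + 1) % l.length, Nat.mod_lt _ (Nat.zero_lt_of_lt i.2)⟩) (l.get i)

/-- The arcs among `{a,b,c}` form a subset of the arcs of a directed triangle. -/
def SubDirTriangle (A : V → V → Prop) (a b c : V) : Prop :=
  (¬ A b a ∧ ¬ A c b ∧ ¬ A a c) ∨ (¬ A a b ∧ ¬ A b c ∧ ¬ A c a)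


lemma altPath_aux (A : V → V → Prop) : ∀ (l : List V) (b : Bool)
    (_ : ∀ i (hi : i + 1 < l.length),
      if (i % 2 == 0) = b then A (l.get ⟨i, Nat.lt_of_succ_lt hi⟩) (l.get ⟨i+1, hi⟩)
      else A (l.get ⟨i+1, hi⟩) (l.get ⟨i, Nat.lt_of_succ_lt hi⟩)),
    AltPath A b l
  | [], _, _ => trivial
  | [_], _, _ => trivial
  | x :: y :: rest, b, h => by
    refine ⟨?_, altPath_aux A (y :: rest) (!b) ?_⟩
    · have h0 := h 0 (by simp)
      revert h0
      cases b <;> simp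
    · intro i hi
      have h' := h (i + 1) (by simpa using Nat.succ_lt_succ hi)
      have hmod : ((i + 1) % 2 == 0) = !(i % 2 == 0) := by
        rcases Nat.mod_two_eq_zero_or_one i with h2 | h2 <;> simp [Nat.add_mod, h2]
      rw [hmod] at h'
      cases b <;> rcases hb : (i % 2 == 0) <;> rw [hb] at h' <;> simp at h' ⊢ <;> exact h'

set_option maxHeartbeats 1600000 in
lemma triple6 (A : V → V → Prop) (hA : Oriented A)
    [Fintype V] [DecidableEq V] (h3 : KAntiTraceable 3 A)
    (a b c : V) (hab : a ≠ b) (hac : a ≠ c) (hbc : b ≠ c) :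
    (A a b ∧ A a c) ∨ (A b a ∧ A b c) ∨ (A c a ∧ A c b) ∨
    (A b a ∧ A c a) ∨ (A a b ∧ A c b) ∨ (A a c ∧ A b c) := by
  have hcard3 : ({a, b, c} : Finset V).card = 3 := by
    rw [Finset.card_insert_of_notMem (by simp [hab, hac]),
        Finset.card_insert_of_notMem (by simp [hbc]), Finset.card_singleton]
  obtain ⟨l, hnd, hS, bb, hp⟩ := h3.2 {a, b, c} hcard3
  have hlen : l.length = 3 := by
    have h1 := List.toFinset_card_of_nodup hnd
    rw [hS, hcard3] at h1
    omega
  obtain ⟨x, y, z, rfl⟩ := List.length_eq_three.mp hlen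
  have hxy : x ≠ y := by simp at hnd; tauto
  have hxz : x ≠ z := by simp at hnd; tauto
  have hyz : y ≠ z := by simp at hnd; tauto
  have hx : x = a ∨ x = b ∨ x = c := by
    have : x ∈ ({a, b, c} : Finset V) := hS ▸ (by simp)
    simpa using this
  have hy : y = a ∨ y = b ∨ y = c := by
    have : y ∈ ({a, b, c} : Finset V) := hS ▸ (by simp)
    simpa using this
  have hz : z = a ∨ z = b ∨ z = c := by
    have : z ∈ ({a, b, c} : Finset V) := hS ▸ (by simp)
    simpa using this
  have key : (A x y ∧ A z y) ∨ (A y x ∧ A y z) := by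
    cases bb <;> simp [AltPath] at hp <;> tauto
  rcases hx with rfl | rfl | rfl <;> rcases hy with rfl | rfl | rfl <;>
    rcases hz with rfl | rfl | rfl <;> tauto

set_option maxHeartbeats 1600000

theorem stmt5 [Fintype V] [DecidableEq V] (A : V → V → Prop)
    (hA : Oriented A) (h3 : KAntiTraceable 3 A)
    (hcard : 5 ≤ Fintype.card V) (hodd : Odd (Fintype.card V)) :
    (∃ l : List V, AltCycle A l ∧ l.length = Fintype.card V - 1) ∧
    AntiTraceable A := by
  classical
  set le : V → V → Bool := fun u v => !(decide (A v u)) with hle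
  have hle' : ∀ u v : V, le u v = true ↔ ¬ A v u := by
    intro u v; simp [hle]
  have letrans : ∀ a b c : V, le a b → le b c → le a c := by
    intro u v w h1 h2
    rw [hle'] at h1 h2 ⊢
    intro hwu
    by_cases e1 : u = v
    · exact h2 (e1 ▸ hwu)
    by_cases e2 : v = w
    · exact h1 (e2 ▸ hwu)
    by_cases e3 : u = w
    · exact hA u u (e3 ▸ hwu) (e3 ▸ hwu)
    have hnuw : ¬ A u w := fun h => hA u w h hwu
    have := triple6 A hA h3 u v w e1 e3 e2
    tauto
  have letot : ∀ a b : V, le a b || le b a := by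
    intro u v
    by_cases h : A v u
    · have : ¬ A u v := hA _ _ h
      simp [hle, this]
    · simp [hle, h]
  set l : List V := (Finset.univ.toList (α := V)).mergeSort le with hl
  have hperm : List.Perm l (Finset.univ.toList (α := V)) := List.mergeSort_perm _ le
  have hnd : l.Nodup := hperm.symm.nodup (Finset.nodup_toList _)
  have hsorted : l.Pairwise (fun a b => le a b = true) := by
    simpa using List.pairwise_mergeSort letrans letot (Finset.univ.toList (α := V))
  have hpw : ∀ (i j : Fin l.length), i.1 < j.1 → ¬ A (l.get j) (l.get i) := by
    intro i j hij
    have := List.pairwise_iff_get.mp hsorted i j hij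
    rwa [hle'] at this
  have hgap : ∀ (i j : Fin l.length), i.1 + 2 ≤ j.1 → A (l.get i) (l.get j) := by
    intro i j hij
    by_contra hnot
    have hm : i.1 + 1 < l.length := by have := j.2; omega
    have h1 : ¬ A (l.get ⟨i.1 + 1, hm⟩) (l.get i) :=
      hpw i ⟨i.1 + 1, hm⟩ (Nat.lt_succ_self i.1)
    have h2 : ¬ A (l.get j) (l.get ⟨i.1 + 1, hm⟩) :=
      hpw ⟨i.1 + 1, hm⟩ j (show i.1 + 1 < j.1 by omega)
    have h3' : ¬ A (l.get j) (l.get i) := hpw i j (show i.1 < j.1 by omega)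
    have hinj := List.nodup_iff_injective_get.mp hnd
    have hne1 : l.get i ≠ l.get ⟨i.1 + 1, hm⟩ := fun h => by
      have h5 : i.1 = i.1 + 1 := by
        have h4 := congrArg Fin.val (hinj h)
        simpa [Fin.val_mk] using h4
      omega
    have hne2 : l.get i ≠ l.get j := fun h => by
      have h5 : i.1 = j.1 := congrArg Fin.val (hinj h)
      omega
    have hne3 : l.get ⟨i.1 + 1, hm⟩ ≠ l.get j := fun h => by
      have h5 : i.1 + 1 = j.1 := by
        have h4 := congrArg Fin.val (hinj h)
        simpa [Fin.val_mk] using h4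
      omega
    have := triple6 A hA h3 (l.get i) (l.get ⟨i.1 + 1, hm⟩) (l.get j) hne1 hne2 hne3
    tauto
  have hlen : l.length = Fintype.card V := by
    rw [hperm.length_eq, Finset.length_toList, Finset.card_univ]
  obtain ⟨k, hk⟩ : ∃ k, l.length = 2 * k + 1 ∧ 2 ≤ k := by
    obtain ⟨m, hm⟩ := hodd
    exact ⟨m, by omega⟩
  have hidxp : ∀ t : Fin (2 * k + 1),
      (if t.1 % 2 = 0 then t.1 / 2 else k + 1 + t.1 / 2) < l.length := by
    intro t; have := t.2; split <;> omega
  have hidxc : ∀ t : Fin (2 * k),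
      (if t.1 % 2 = 0 then t.1 / 2 else k + 1 + t.1 / 2) < l.length := by
    intro t; have := t.2; split <;> omega
  have hinjc : (List.ofFn (fun t : Fin (2 * k) => l.get ⟨_, hidxc t⟩)).Nodup := by
    rw [List.nodup_ofFn]
    intro s t hst
    have h4 := congrArg Fin.val (List.nodup_iff_injective_get.mp hnd hst)
    simp only [Fin.val_mk] at h4
    have hs := s.2; have ht := t.2
    apply Fin.ext
    split_ifs at h4 <;> omega
  have hinjp : (List.ofFn (fun t : Fin (2 * k + 1) => l.get ⟨_, hidxp t⟩)).Nodup := by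
    rw [List.nodup_ofFn]
    intro s t hst
    have h4 := congrArg Fin.val (List.nodup_iff_injective_get.mp hnd hst)
    simp only [Fin.val_mk] at h4
    have hs := s.2; have ht := t.2
    apply Fin.ext
    split_ifs at h4 <;> omega
  constructor
  · -- the cycle
    refine ⟨List.ofFn (fun t : Fin (2 * k) => l.get ⟨_, hidxc t⟩), ⟨hinjc, ?_, ?_, ?_⟩, ?_⟩
    · rw [List.length_ofFn]; omega
    · rw [List.length_ofFn]; omega
    · intro i
      obtain ⟨m, hmlt⟩ := i
      have hclen : (List.ofFn (fun t : Fin (2 * k) => l.get ⟨_, hidxc t⟩)).length = 2 * k :=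
        List.length_ofFn
      have hm2k : m < 2 * k := by omega
      have hmod : (m + 1) % (List.ofFn (fun t : Fin (2 * k) => l.get ⟨_, hidxc t⟩)).length
          = if m = 2 * k - 1 then 0 else m + 1 := by
        rw [hclen]
        split
        · next h => rw [show m + 1 = 2 * k by omega, Nat.mod_self]
        · next h => exact Nat.mod_eq_of_lt (by omega)
      by_cases hpar : m % 2 = 0
      · have hne : ¬ m = 2 * k - 1 := by omega
        rw [if_neg hne] at hmod
        rw [if_pos hpar]
        simp only [hmod]
        simp only [List.get_eq_getElem, List.getElem_ofFn, Fin.val_mk,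
          if_pos hpar, if_neg (show ¬ (m + 1) % 2 = 0 by omega)]
        exact hgap _ _ (show m / 2 + 2 ≤ k + 1 + (m + 1) / 2 by omega)
      · rw [if_neg hpar]
        by_cases hlast : m = 2 * k - 1
        · rw [if_pos hlast] at hmod
          simp only [hmod]
          simp only [List.get_eq_getElem, List.getElem_ofFn, Fin.val_mk,
            if_pos (show (0 : ℕ) % 2 = 0 by rfl), if_neg hpar, Nat.zero_div]
          exact hgap _ _ (show 0 + 2 ≤ k + 1 + m / 2 by omega)
        · rw [if_neg hlast] at hmod
          simp only [hmod]
          simp only [List.get_eq_getElem, List.getElem_ofFn, Fin.val_mk,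
            if_pos (show (m + 1) % 2 = 0 by omega), if_neg hpar]
          exact hgap _ _ (show (m + 1) / 2 + 2 ≤ k + 1 + m / 2 by omega)
    · rw [List.length_ofFn]; omega
  · -- the hamiltonian path
    refine ⟨List.ofFn (fun t : Fin (2 * k + 1) => l.get ⟨_, hidxp t⟩), hinjp, ?_, true, ?_⟩
    · apply Finset.eq_univ_of_card
      rw [List.toFinset_card_of_nodup hinjp, List.length_ofFn]
      omega
    · apply altPath_aux
      intro i hi
      rw [List.length_ofFn] at hi
      by_cases hpar : i % 2 = 0
      · rw [if_pos (show ((i % 2 == 0) = true) by simp [hpar])]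
        simp only [List.get_eq_getElem, List.getElem_ofFn, Fin.val_mk,
          if_pos hpar, if_neg (show ¬ (i + 1) % 2 = 0 by omega)]
        exact hgap _ _ (show i / 2 + 2 ≤ k + 1 + (i + 1) / 2 by omega)
      · rw [if_neg (show ¬ ((i % 2 == 0) = true) by simp [hpar])]
        simp only [List.get_eq_getElem, List.getElem_ofFn, Fin.val_mk,
          if_pos (show (i + 1) % 2 = 0 by omega), if_neg hpar]
        exact hgap _ _ (show (i + 1) / 2 + 2 ≤ k + 1 + i / 2 by omega)
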